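/- The function F(x) = Σ_{i=0}^{∞} x_i · 4^{Σ_{j=0}^{i−1} x_j} · (Σ_{j=i}^{∞} (1 − x_j)/2^j)^2 (binary digits (x_i) of x, finite expansion for dyadic rationals) is continuous at 0 and at every point of (0,1) whose binary expansion is infinite, and discontinuous at every dyadic rational in (0,1]. -/

import Mathlib

noncomputable def digit (x : ℝ) (i : ℕ) : ℕ := (⌊2 ^ i * x⌋).toNat % 2

noncomputable def tail (x : ℝ) (i : ℕ) : ℝ :=
  ∑' j : ℕ, (1 - (digit x (i + j) : ℝ)) / 2 ^ (i + j)

noncomputable def F (x : ℝ) : ℝ :=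
  ∑' i : ℕ, (digit x i : ℝ) * 4 ^ (∑ j ∈ Finset.range i, digit x j) * (tail x i) ^ 2

open Finset

noncomputable def Q (x : ℝ) (i : ℕ) : ℝ := ∑ j ∈ Finset.range i, (digit x j : ℝ) / 2 ^ j

noncomputable def S (x : ℝ) (i : ℕ) : ℕ := ∑ j ∈ Finset.range i, digit x j

noncomputable def term (x : ℝ) (i : ℕ) : ℝ :=
  (digit x i : ℝ) * 4 ^ (S x i) * (tail x i) ^ 2

lemma digit_le_one (x : ℝ) (i : ℕ) : digit x i ≤ 1 :=
  Nat.lt_succ_iff.mp (Nat.mod_lt _ two_pos)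

lemma digit_cast_int (x : ℝ) (hx : 0 ≤ x) (i : ℕ) : (digit x i : ℤ) = ⌊2 ^ i * x⌋ % 2 := by
  have h : (0:ℤ) ≤ ⌊(2:ℝ) ^ i * x⌋ := Int.floor_nonneg.mpr (by positivity)
  unfold digit
  push_cast
  rw [Int.toNat_of_nonneg h]

lemma floor_two_mul' (y : ℝ) : ⌊2 * y⌋ = 2 * ⌊y⌋ + ⌊2 * y⌋ % 2 := by
  have h1 : 2 * ⌊y⌋ ≤ ⌊2 * y⌋ := by
    apply Int.le_floor.mpr; push_cast; linarith [Int.floor_le y]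
  have h2 : ⌊2 * y⌋ < 2 * ⌊y⌋ + 2 := by
    apply Int.floor_lt.mpr; push_cast; linarith [Int.lt_floor_add_one y]
  omega

lemma Q_succ_floor (x : ℝ) (hx0 : 0 ≤ x) (hx1 : x ≤ 1) (i : ℕ) :
    Q x (i + 1) = (⌊2 ^ i * x⌋ : ℝ) / 2 ^ i := by
  induction i with
  | zero =>
    have h1 : (0:ℤ) ≤ ⌊(2:ℝ)^0 * x⌋ := Int.floor_nonneg.mpr (by simpa using hx0)
    have h2 : ⌊(2:ℝ)^0 * x⌋ ≤ 1 := by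
      have := Int.floor_le_floor (R := ℝ) (by simpa using hx1 : (2:ℝ)^0 * x ≤ 1)
      simpa using this
    have hd : ((digit x 0 : ℤ)) = ⌊(2:ℝ) ^ 0 * x⌋ := by
      rw [digit_cast_int x hx0 0]; omega
    have : ((digit x 0 : ℝ)) = ((⌊(2:ℝ) ^ 0 * x⌋ : ℤ) : ℝ) := by exact_mod_cast congrArg (Int.cast : ℤ → ℝ) hd
    simp [Q, this]
  | succ i ih =>
    have key : ⌊(2:ℝ) ^ (i+1) * x⌋ = 2 * ⌊(2:ℝ) ^ i * x⌋ + ⌊(2:ℝ) ^ (i+1) * x⌋ % 2 := by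
      have : (2:ℝ) ^ (i+1) * x = 2 * ((2:ℝ)^i * x) := by ring
      rw [this]; exact floor_two_mul' _
    rw [Q, Finset.sum_range_succ, ← Q, ih]
    have hd : ((digit x (i+1) : ℝ)) = ((⌊(2:ℝ) ^ (i+1) * x⌋ % 2 : ℤ) : ℝ) := by
      exact_mod_cast congrArg (Int.cast : ℤ → ℝ) (digit_cast_int x hx0 (i+1))
    rw [hd]
    have h2 : ((⌊(2:ℝ) ^ (i+1) * x⌋ : ℤ) : ℝ) = 2 * (⌊(2:ℝ)^i * x⌋ : ℝ) + ((⌊(2:ℝ) ^ (i+1) * x⌋ % 2 : ℤ) : ℝ) := by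
      exact_mod_cast congrArg (Int.cast : ℤ → ℝ) key
    rw [h2]
    field_simp
    ring
lemma Q_le (x : ℝ) (hx0 : 0 ≤ x) (hx1 : x ≤ 1) (i : ℕ) : Q x i ≤ x := by
  cases i with
  | zero => simpa [Q] using hx0
  | succ i =>
    rw [Q_succ_floor x hx0 hx1]
    rw [div_le_iff₀ (by positivity)]
    linarith [Int.floor_le ((2:ℝ)^i * x)]

lemma lt_Q_add (x : ℝ) (hx0 : 0 ≤ x) (hx1 : x ≤ 1) (i : ℕ) : x < Q x i + 2 / 2 ^ i := by
  cases i with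
  | zero => simp [Q]; linarith
  | succ i =>
    rw [Q_succ_floor x hx0 hx1]
    have h := Int.lt_floor_add_one ((2:ℝ)^i * x)
    have hp : (0:ℝ) < 2 ^ i := by positivity
    have h2 : (2:ℝ) / 2 ^ (i+1) = 1 / 2 ^ i := by
      rw [pow_succ]; field_simp
    rw [h2, ← add_div, lt_div_iff₀ hp]
    linarith

lemma Q_succ (x : ℝ) (i : ℕ) : Q x (i + 1) = Q x i + (digit x i : ℝ) / 2 ^ i := by
  simp [Q, Finset.sum_range_succ]

lemma digit_cast_le_one (x : ℝ) (j : ℕ) : (digit x j : ℝ) ≤ 1 := by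
  exact_mod_cast digit_le_one x j

lemma half_pow (j : ℕ) : ((1:ℝ)/2) ^ j = 1 / 2 ^ j := by
  rw [div_pow]; norm_num

lemma tail_summand_nonneg (x : ℝ) (j : ℕ) : 0 ≤ (1 - (digit x j : ℝ)) / 2 ^ j := by
  have h := digit_cast_le_one x j
  have h2 : (0:ℝ) ≤ 1 - (digit x j : ℝ) := by linarith
  positivity

lemma summable_shift (i : ℕ) : Summable (fun j : ℕ => ((1:ℝ)/2) ^ (i + j)) := by
  simpa [pow_add] using summable_geometric_two.mul_left (((1:ℝ)/2) ^ i)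

lemma tail_summable (x : ℝ) (i : ℕ) :
    Summable (fun j : ℕ => (1 - (digit x (i + j) : ℝ)) / 2 ^ (i + j)) := by
  apply Summable.of_nonneg_of_le (fun j => tail_summand_nonneg x (i+j))
    (fun j => ?_) (summable_shift i)
  rw [half_pow]
  gcongr
  linarith [digit_cast_le_one x (i+j)]

lemma digit_summable (x : ℝ) : Summable (fun j : ℕ => (digit x j : ℝ) / 2 ^ j) := by
  apply Summable.of_nonneg_of_le (fun j => by positivity) (fun j => ?_) summable_geometric_two
  rw [half_pow]
  gcongr
  exact digit_cast_le_one x j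

lemma tendsto_Q (x : ℝ) (hx0 : 0 ≤ x) (hx1 : x ≤ 1) :
    Filter.Tendsto (fun n => Q x n) Filter.atTop (nhds x) := by
  have h0 : Filter.Tendsto (fun n : ℕ => x - 2 * (1/2:ℝ) ^ n) Filter.atTop (nhds (x - 2 * 0)) := by
    exact (tendsto_const_nhds.sub ((tendsto_pow_atTop_nhds_zero_of_lt_one (by norm_num)
      (by norm_num)).const_mul 2))
  rw [show x - 2 * (0:ℝ) = x by ring] at h0
  apply tendsto_of_tendsto_of_tendsto_of_le_of_le h0 tendsto_const_nhds
  · intro n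
    have h := lt_Q_add x hx0 hx1 n
    have hp : ((1:ℝ)/2)^n = 1/2^n := half_pow n
    have h2 : (2:ℝ)/2^n = 2*(1/2^n) := by ring
    show x - 2*(1/2:ℝ)^n ≤ Q x n
    rw [hp]
    linarith
  · intro n; exact Q_le x hx0 hx1 n

lemma hasSum_digit (x : ℝ) (hx0 : 0 ≤ x) (hx1 : x ≤ 1) :
    HasSum (fun j : ℕ => (digit x j : ℝ) / 2 ^ j) x := by
  have hs := digit_summable x
  have h1 : Filter.Tendsto (fun n => Q x n) Filter.atTop
      (nhds (∑' j, (digit x j : ℝ) / 2 ^ j)) := hs.hasSum.tendsto_sum_nat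
  have heq : (∑' j, (digit x j : ℝ) / 2 ^ j) = x :=
    tendsto_nhds_unique h1 (tendsto_Q x hx0 hx1)
  have h2 := hs.hasSum
  rwa [heq] at h2

lemma tail_eq (x : ℝ) (hx0 : 0 ≤ x) (hx1 : x ≤ 1) (i : ℕ) :
    tail x i = 2 / 2 ^ i - x + Q x i := by
  have hgeo : HasSum (fun j : ℕ => (1:ℝ) / 2 ^ (i + j)) (2 / 2 ^ i) := by
    have h := hasSum_geometric_two.mul_left (((1:ℝ)/2) ^ i)
    have he : (fun j : ℕ => ((1:ℝ)/2) ^ i * ((1:ℝ)/2) ^ j) = fun j : ℕ => (1:ℝ) / 2 ^ (i + j) := by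
      funext j
      rw [← pow_add, half_pow]
    rw [he] at h
    have hv : ((1:ℝ)/2)^i * 2 = 2/2^i := by
      rw [half_pow]; ring
    rwa [hv] at h
  have hdig : HasSum (fun j : ℕ => (digit x (i + j) : ℝ) / 2 ^ (i + j)) (x - Q x i) := by
    have h : HasSum (fun j : ℕ => (digit x (j + i) : ℝ) / 2 ^ (j + i)) (x - Q x i) := by
      apply (hasSum_nat_add_iff (f := fun j : ℕ => (digit x j : ℝ) / 2 ^ j) i).mpr
      have : x - Q x i + ∑ j ∈ Finset.range i, (digit x j : ℝ) / 2 ^ j = x := by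
        rw [Q]; ring
      rw [this]
      exact hasSum_digit x hx0 hx1
    have he : (fun j : ℕ => (digit x (j + i) : ℝ) / 2 ^ (j + i))
        = fun j : ℕ => (digit x (i + j) : ℝ) / 2 ^ (i + j) := by
      funext j; rw [add_comm]
    rwa [he] at h
  have h := hgeo.sub hdig
  have heq : (fun j : ℕ => (1:ℝ) / 2 ^ (i + j) - (digit x (i + j) : ℝ) / 2 ^ (i + j))
      = fun j : ℕ => (1 - (digit x (i + j) : ℝ)) / 2 ^ (i + j) := by
    funext j; ring
  rw [heq] at h
  rw [tail, h.tsum_eq]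
  ring
lemma tail_pos (x : ℝ) (hx0 : 0 ≤ x) (hx1 : x ≤ 1) (i : ℕ) : 0 < tail x i := by
  rw [tail_eq x hx0 hx1]
  linarith [lt_Q_add x hx0 hx1 i]

lemma tail_le (x : ℝ) (hx0 : 0 ≤ x) (hx1 : x ≤ 1) (i : ℕ) : tail x i ≤ 2 / 2 ^ i := by
  rw [tail_eq x hx0 hx1]
  linarith [Q_le x hx0 hx1 i]

lemma tail_succ (x : ℝ) (hx0 : 0 ≤ x) (hx1 : x ≤ 1) (i : ℕ) :
    tail x (i + 1) = tail x i - (1 - (digit x i : ℝ)) / 2 ^ i := by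
  rw [tail_eq x hx0 hx1, tail_eq x hx0 hx1, Q_succ, pow_succ]
  have h : (2:ℝ) ^ i ≠ 0 := by positivity
  field_simp
  ring

noncomputable def psi (x : ℝ) (i : ℕ) : ℝ := 4 ^ (S x i) * (4 / 4 ^ i - (tail x i) ^ 2)

lemma four_pow (i : ℕ) : (4:ℝ) ^ i = (2 ^ i) ^ 2 := by
  rw [show (4:ℝ) = 2^2 by norm_num, ← pow_mul, mul_comm, pow_mul]

lemma psi_nonneg (x : ℝ) (hx0 : 0 ≤ x) (hx1 : x ≤ 1) (i : ℕ) : 0 ≤ psi x i := by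
  have ht := tail_pos x hx0 hx1 i
  have ht2 := tail_le x hx0 hx1 i
  have hp : (0:ℝ) < 2 ^ i := by positivity
  have h4 : (4:ℝ) / 4 ^ i = (2 / 2 ^ i) ^ 2 := by
    rw [four_pow, div_pow]; norm_num
  apply mul_nonneg (by positivity)
  rw [h4]
  nlinarith

lemma S_succ (x : ℝ) (i : ℕ) : S x (i + 1) = S x i + digit x i := by
  simp [S, Finset.sum_range_succ]

lemma term_nonneg (x : ℝ) (i : ℕ) : 0 ≤ term x i := by
  unfold term; positivity

lemma psi_step (x : ℝ) (hx0 : 0 ≤ x) (hx1 : x ≤ 1) (i : ℕ) :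
    psi x (i + 1) + 3 * term x i ≤ psi x i := by
  have ht := tail_pos x hx0 hx1 i
  have ht2 := tail_le x hx0 hx1 i
  have hp : (0:ℝ) < 2 ^ i := by positivity
  have ha : (0:ℝ) ≤ 4 ^ (S x i) := by positivity
  have h4 : (4:ℝ) ^ i = (2 ^ i) ^ 2 := four_pow i
  rcases Nat.le_one_iff_eq_zero_or_eq_one.mp (digit_le_one x i) with h | h
  · unfold psi term
    rw [S_succ, tail_succ x hx0 hx1, h]
    push_cast
    simp only [add_zero]
    rw [pow_succ (4:ℝ) i]
    have htq : tail x i * 2 ^ i ≤ 2 := (le_div_iff₀ hp).mp ht2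
    have key : (4:ℝ) / (4 ^ i * 4) - (tail x i - (1 - 0) / 2 ^ i) ^ 2
        ≤ 4 / 4 ^ i - (tail x i) ^ 2 := by
      rw [h4]
      have hexp : (4:ℝ) / ((2^i)^2 * 4) - (tail x i - (1-0)/2^i)^2
          = 2 * tail x i / 2^i - (tail x i)^2 := by
        field_simp
        ring
      rw [hexp]
      have h5 : 2 * tail x i / 2 ^ i ≤ 4 / (2^i)^2 := by
        rw [div_le_div_iff₀ hp (by positivity)]
        nlinarith
      linarith
    linarith [mul_le_mul_of_nonneg_left key ha]
  · unfold psi term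
    rw [S_succ, tail_succ x hx0 hx1, h]
    push_cast
    rw [pow_succ (4:ℝ), pow_succ (4:ℝ) i]
    have h4i : (4:ℝ)^i ≠ 0 := by positivity
    field_simp
    ring_nf
    nlinarith [sq_nonneg (tail x i), mul_pos hp hp]
lemma psi_chain (x : ℝ) (hx0 : 0 ≤ x) (hx1 : x ≤ 1) (N M : ℕ) :
    3 * (∑ i ∈ Finset.Ico N (N + M), term x i) + psi x (N + M) ≤ psi x N := by
  induction M with
  | zero => simp
  | succ M ih =>
    have h1 : N ≤ N + M := Nat.le_add_right N M
    rw [show N + (M + 1) = (N + M) + 1 by ring]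
    rw [Finset.sum_Ico_succ_top h1]
    have h2 := psi_step x hx0 hx1 (N + M)
    linarith

lemma sum_term_le_psi (x : ℝ) (hx0 : 0 ≤ x) (hx1 : x ≤ 1) (N M : ℕ) :
    ∑ i ∈ Finset.Ico N (N + M), term x i ≤ psi x N / 3 := by
  have h := psi_chain x hx0 hx1 N M
  have h2 := psi_nonneg x hx0 hx1 (N + M)
  linarith

lemma term_summable (x : ℝ) (hx0 : 0 ≤ x) (hx1 : x ≤ 1) : Summable (term x) := by
  apply summable_of_sum_range_le (term_nonneg x) (c := psi x 0 / 3)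
  intro n
  have h := sum_term_le_psi x hx0 hx1 0 n
  simpa using h

lemma F_eq_tsum (x : ℝ) : F x = ∑' i, term x i := rfl

lemma F_split (x : ℝ) (hx0 : 0 ≤ x) (hx1 : x ≤ 1) (N : ℕ) :
    F x = ∑ i ∈ Finset.range N, term x i + ∑' j, term x (N + j) := by
  rw [F_eq_tsum, ← Summable.sum_add_tsum_nat_add N (term_summable x hx0 hx1)]
  congr 1
  apply tsum_congr
  intro j
  rw [add_comm]

lemma tsum_tail_le_psi (x : ℝ) (hx0 : 0 ≤ x) (hx1 : x ≤ 1) (N : ℕ) :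
    ∑' j, term x (N + j) ≤ psi x N / 3 := by
  apply Real.tsum_le_of_sum_range_le (fun j => term_nonneg x (N + j))
  intro M
  have h := sum_term_le_psi x hx0 hx1 N M
  rw [Finset.sum_Ico_eq_sum_range] at h
  simpa using h

lemma tsum_tail_nonneg (x : ℝ) (N : ℕ) : 0 ≤ ∑' j, term x (N + j) :=
  tsum_nonneg (fun j => term_nonneg x (N + j))

lemma psi_le (x : ℝ) (i : ℕ) : psi x i ≤ 4 * 4 ^ (S x i) / 4 ^ i := by
  unfold psi
  have h : (0:ℝ) ≤ 4 ^ (S x i) := by positivity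
  have h2 : (0:ℝ) ≤ (tail x i)^2 := sq_nonneg _
  have h3 : 4 ^ (S x i) * (4 / 4 ^ i - (tail x i) ^ 2) ≤ 4 ^ (S x i) * (4 / 4 ^ i) := by
    apply mul_le_mul_of_nonneg_left (by linarith) h
  calc 4 ^ (S x i) * (4 / 4 ^ i - (tail x i) ^ 2) ≤ 4 ^ (S x i) * (4 / 4 ^ i) := h3
    _ = 4 * 4 ^ (S x i) / 4 ^ i := by ring
lemma digit_eq_zero_of_lt (x : ℝ) (hx0 : 0 ≤ x) (i : ℕ) (h : 2 ^ i * x < 1) :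
    digit x i = 0 := by
  unfold digit
  have h1 : ⌊(2:ℝ) ^ i * x⌋ = 0 := by
    rw [Int.floor_eq_zero_iff]
    constructor
    · positivity
    · exact h
  rw [h1]
  rfl

lemma F_zero : F 0 = 0 := by
  simp [F, digit]

lemma part1 : ContinuousWithinAt F (Set.Icc (0 : ℝ) 1) 0 := by
  rw [Metric.continuousWithinAt_iff]
  intro ε hε
  obtain ⟨N, hN⟩ := exists_pow_lt_of_lt_one (show (0:ℝ) < 3 * ε / 4 by linarith)
    (by norm_num : (1/4:ℝ) < 1)
  refine ⟨(1/2) ^ N, by positivity, ?_⟩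
  intro y hy hdist
  obtain ⟨hy0, hy1⟩ := hy
  rw [Real.dist_eq] at hdist ⊢
  rw [F_zero, sub_zero]
  have hylt : y < 1 / 2 ^ N := by
    rw [sub_zero, abs_of_nonneg hy0, half_pow] at hdist
    exact hdist
  have hdig : ∀ i < N, digit y i = 0 := by
    intro i hi
    apply digit_eq_zero_of_lt y hy0
    have h1 : (2:ℝ) ^ i * y < 2 ^ i / 2 ^ N := by
      have := mul_lt_mul_of_pos_left hylt (show (0:ℝ) < 2^i by positivity)
      calc (2:ℝ)^i * y < 2^i * (1/2^N) := this
        _ = 2^i / 2^N := by ring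
    have h2 : (2:ℝ) ^ i / 2 ^ N ≤ 1 := by
      rw [div_le_one (by positivity)]
      exact pow_le_pow_right₀ (by norm_num) (le_of_lt hi)
    linarith
  have hS : S y N = 0 := by
    unfold S
    apply Finset.sum_eq_zero
    intro i hi
    exact hdig i (Finset.mem_range.mp hi)
  have hzero : ∑ i ∈ Finset.range N, term y i = 0 := by
    apply Finset.sum_eq_zero
    intro i hi
    unfold term
    rw [hdig i (Finset.mem_range.mp hi)]
    simp
  have hsplit := F_split y hy0 hy1 N
  rw [hzero, zero_add] at hsplit
  have hb1 := tsum_tail_le_psi y hy0 hy1 N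
  have hb2 := psi_le y N
  rw [hS] at hb2
  have hb3 : (4:ℝ) * 4 ^ (0:ℕ) / 4 ^ N = 4 * (1/4) ^ N := by
    rw [div_pow]
    norm_num
    ring
  have hFy : F y ≤ 4 * (1/4:ℝ) ^ N / 3 := by
    rw [hsplit]
    rw [hb3] at hb2
    linarith
  have hFy0 : 0 ≤ F y := by
    rw [hsplit]; exact tsum_tail_nonneg y N
  rw [abs_of_nonneg hFy0]
  calc F y ≤ 4 * (1/4:ℝ)^N / 3 := hFy
    _ < 4 * (3 * ε / 4) / 3 := by linarith
    _ = ε := by ring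
lemma S_le (x : ℝ) (i : ℕ) : S x i ≤ i := by
  calc S x i ≤ ∑ j ∈ Finset.range i, 1 := Finset.sum_le_sum (fun j _ => digit_le_one x j)
    _ = i := by simp

lemma S_le_add (x : ℝ) (M i : ℕ) (h : M ≤ i) : S x i ≤ S x M + (i - M) := by
  have hsplit : S x i = S x M + ∑ j ∈ Finset.Ico M i, digit x j := by
    unfold S
    rw [Finset.range_eq_Ico, Finset.range_eq_Ico]
    exact (Finset.sum_Ico_consecutive (digit x) (Nat.zero_le M) h).symm
  rw [hsplit]
  have h2 : ∑ j ∈ Finset.Ico M i, digit x j ≤ ∑ j ∈ Finset.Ico M i, 1 :=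
    Finset.sum_le_sum (fun j _ => digit_le_one x j)
  have h2' : ∑ j ∈ Finset.Ico M i, digit x j ≤ i - M := by simpa using h2
  exact Nat.add_le_add_left h2' _

lemma exists_zero_digit (x : ℝ) (hx0 : 0 ≤ x) (hx1 : x ≤ 1) (m : ℕ) :
    ∃ i, m ≤ i ∧ digit x i = 0 := by
  by_contra h
  push_neg at h
  have hone : ∀ i, m ≤ i → digit x i = 1 := by
    intro i hi
    have := h i hi
    have h2 := digit_le_one x i
    omega
  have hconst : ∀ i, m ≤ i → tail x i = tail x m := by
    intro i hi
    induction i with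
    | zero => rw [Nat.le_zero.mp hi]
    | succ i ih =>
      rcases Nat.lt_or_ge m (i+1) with h' | h'
      · have him : m ≤ i := by omega
        rw [tail_succ x hx0 hx1, hone i him, ih him]
        simp
      · have : m = i + 1 := by omega
        rw [this]
  obtain ⟨n, hn⟩ := exists_pow_lt_of_lt_one (show (0:ℝ) < tail x m / 2 by
    linarith [tail_pos x hx0 hx1 m]) (by norm_num : (1/2:ℝ) < 1)
  set i := max m n with hidef
  have h1 : tail x i = tail x m := hconst i (le_max_left m n)
  have h2 : tail x i ≤ 2 / 2 ^ i := tail_le x hx0 hx1 i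
  have h3 : (2:ℝ) / 2 ^ i ≤ 2 / 2 ^ n := by
    gcongr
    · norm_num
    · exact le_max_right m n
  have h4 : (2:ℝ) / 2 ^ n < tail x m := by
    rw [half_pow] at hn
    rw [div_lt_iff₀ (by positivity)]
    rw [div_lt_div_iff₀ (by positivity) (by norm_num)] at hn
    linarith [hn]
  linarith
  
lemma exists_S_small (x : ℝ) (hx0 : 0 ≤ x) (hx1 : x ≤ 1) (K : ℕ) :
    ∃ M, S x M + K ≤ M := by
  induction K with
  | zero => exact ⟨0, by simp [S]⟩
  | succ K ih =>
    obtain ⟨M, hM⟩ := ih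
    obtain ⟨i, him, hdi⟩ := exists_zero_digit x hx0 hx1 M
    refine ⟨i + 1, ?_⟩
    have h1 : S x (i+1) = S x i := by rw [S_succ, hdi]; omega
    have h2 := S_le_add x M i him
    omega

lemma floors_eq (x : ℝ) (hnotint : ∀ i : ℕ, ∀ m : ℤ, (2:ℝ) ^ i * x ≠ m) (M : ℕ) :
    ∃ δ > 0, ∀ y : ℝ, |y - x| < δ → ∀ i < M, ⌊(2:ℝ) ^ i * y⌋ = ⌊(2:ℝ) ^ i * x⌋ := by
  induction M with
  | zero => exact ⟨1, by norm_num, fun y _ i hi => absurd hi (Nat.not_lt_zero i)⟩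
  | succ M ih =>
    obtain ⟨δ, hδpos, hδ⟩ := ih
    set a := (2:ℝ) ^ M * x with ha
    have h1 : (0:ℝ) < a - ⌊a⌋ := by
      rcases lt_or_eq_of_le (Int.floor_le a) with h | h
      · linarith
      · exact absurd h.symm (hnotint M ⌊a⌋)
    have h2 : (0:ℝ) < ⌊a⌋ + 1 - a := by linarith [Int.lt_floor_add_one a]
    set δ' := min δ (min (a - ⌊a⌋) (⌊a⌋ + 1 - a) / 2 ^ M) with hδ'
    refine ⟨δ', ?_, ?_⟩
    · apply lt_min hδpos
      apply div_pos (lt_min h1 h2) (by positivity)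
    · intro y hy i hi
      rcases Nat.lt_or_ge i M with h | h
      · exact hδ y (lt_of_lt_of_le hy (min_le_left _ _)) i h
      · have hiM : i = M := by omega
        subst hiM
        have hy2 : |y - x| < min (a - ⌊a⌋) (⌊a⌋ + 1 - a) / 2 ^ i :=
          lt_of_lt_of_le hy (min_le_right _ _)
        rw [abs_sub_lt_iff] at hy2
        have hp : (0:ℝ) < 2 ^ i := by positivity
        have hmin1 : min (a - ⌊a⌋) (⌊a⌋ + 1 - a) ≤ a - ⌊a⌋ := min_le_left _ _
        have hmin2 : min (a - ⌊a⌋) (⌊a⌋ + 1 - a) ≤ ⌊a⌋ + 1 - a := min_le_right _ _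
        obtain ⟨hy2a, hy2b⟩ := hy2
        have hA := (lt_div_iff₀ hp).mp hy2a
        have hB := (lt_div_iff₀ hp).mp hy2b
        have hexpA : (y - x) * 2 ^ i = 2 ^ i * y - a := by rw [ha]; ring
        have hexpB : (x - y) * 2 ^ i = a - 2 ^ i * y := by rw [ha]; ring
        rw [hexpA] at hA
        rw [hexpB] at hB
        apply Int.floor_eq_iff.mpr
        constructor
        · linarith
        · push_cast
          linarith
lemma part2 (x : ℝ) (hx : x ∈ Set.Ioo (0:ℝ) 1) (hnd : ¬∃ n k : ℕ, x = (n:ℝ) / 2 ^ k) :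
    ContinuousWithinAt F (Set.Icc (0:ℝ) 1) x := by
  obtain ⟨hx0', hx1'⟩ := hx
  have hx0 : 0 ≤ x := le_of_lt hx0'
  have hx1 : x ≤ 1 := le_of_lt hx1'
  have hnotint : ∀ i : ℕ, ∀ m : ℤ, (2:ℝ) ^ i * x ≠ m := by
    intro i m heq
    apply hnd
    have hm : (0:ℤ) ≤ m := by
      have hpos : (0:ℝ) < 2 ^ i * x := by positivity
      rw [heq] at hpos
      exact_mod_cast le_of_lt hpos
    refine ⟨m.toNat, i, ?_⟩
    rw [eq_div_iff (show ((2:ℝ)^i) ≠ 0 by positivity)]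
    have hcast : ((m.toNat : ℕ) : ℝ) = (m : ℝ) := by
      exact_mod_cast congrArg (Int.cast : ℤ → ℝ) (Int.toNat_of_nonneg hm)
    rw [hcast]
    linarith [heq]
  rw [Metric.continuousWithinAt_iff]
  intro ε hε
  obtain ⟨K, hK⟩ := exists_pow_lt_of_lt_one (show (0:ℝ) < ε/8 by linarith)
    (by norm_num : (1/4:ℝ) < 1)
  obtain ⟨M, hM⟩ := exists_S_small x hx0 hx1 K
  obtain ⟨δ1, hδ1pos, hδ1⟩ := floors_eq x hnotint M
  set C : ℝ := (M:ℝ) * (4 ^ (M+1)) + 1 with hC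
  have hCpos : 0 < C := by positivity
  refine ⟨min δ1 (ε/(4*C)), by positivity, ?_⟩
  intro y hy hdist
  obtain ⟨hy0, hy1⟩ := hy
  rw [Real.dist_eq] at hdist ⊢
  have hd1 : |y - x| < δ1 := lt_of_lt_of_le hdist (min_le_left _ _)
  have hd2 : |y - x| < ε/(4*C) := lt_of_lt_of_le hdist (min_le_right _ _)
  have hfl := hδ1 y hd1
  have hdig : ∀ i < M, digit y i = digit x i := by
    intro i hi
    unfold digit
    rw [hfl i hi]
  have hQ : ∀ i ≤ M, Q y i = Q x i := by
    intro i hi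
    unfold Q
    apply Finset.sum_congr rfl
    intro j hj
    rw [hdig j (lt_of_lt_of_le (Finset.mem_range.mp hj) hi)]
  have hSeq : ∀ i ≤ M, S y i = S x i := by
    intro i hi
    unfold S
    apply Finset.sum_congr rfl
    intro j hj
    rw [hdig j (lt_of_lt_of_le (Finset.mem_range.mp hj) hi)]
  have hR : ∀ z : ℝ, 0 ≤ z → z ≤ 1 → S z M = S x M →
      (0 ≤ ∑' j, term z (M + j) ∧ ∑' j, term z (M + j) ≤ ε/4) := by
    intro z hz0 hz1 hSz
    refine ⟨tsum_tail_nonneg z M, ?_⟩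
    have h1 := tsum_tail_le_psi z hz0 hz1 M
    have h2 := psi_le z M
    have hpow : (4:ℝ) ^ (S z M) * 4 ^ K ≤ 4 ^ M := by
      rw [hSz, ← pow_add]
      exact pow_le_pow_right₀ (by norm_num) hM
    have h3 : (4:ℝ) * 4 ^ (S z M) / 4 ^ M ≤ 4 * (1/4:ℝ)^K := by
      rw [div_le_iff₀ (by positivity)]
      have h14 : (1/4:ℝ)^K = 1/4^K := by rw [div_pow]; norm_num
      rw [h14]
      have hKpos : (0:ℝ) < 4^K := by positivity
      rw [show (4:ℝ) * (1/4^K) * 4^M = 4 * (4^M/4^K) by ring]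
      have h4 : (4:ℝ)^(S z M) ≤ 4^M / 4^K := by
        rw [le_div_iff₀ hKpos]
        linarith
      linarith
    have h5 : 4 * (1/4:ℝ)^K ≤ 4 * (ε/8) := by nlinarith [hK]
    calc ∑' j, term z (M + j) ≤ psi z M / 3 := h1
      _ ≤ (4 * 4 ^ (S z M) / 4 ^ M) / 3 := by linarith
      _ ≤ (4 * (ε/8)) / 3 := by linarith
      _ ≤ ε / 4 := by linarith
  obtain ⟨hRy0, hRy⟩ := hR y hy0 hy1 (hSeq M le_rfl)
  obtain ⟨hRx0, hRx⟩ := hR x hx0 hx1 rfl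
  have hterm : ∀ i ∈ Finset.range M, |term y i - term x i| ≤ 4 ^ (M+1) * |y - x| := by
    intro i hi'
    have hi := Finset.mem_range.mp hi'
    have hdi := hdig i hi
    have hQi := hQ i (le_of_lt hi)
    have hty : tail y i = tail x i + (x - y) := by
      rw [tail_eq y hy0 hy1, tail_eq x hx0 hx1, hQi]; ring
    unfold term
    rw [hdi, hSeq i (le_of_lt hi), hty]
    have hbx1 := tail_pos x hx0 hx1 i
    have hbx2 := tail_le x hx0 hx1 i
    have hby1 := tail_pos y hy0 hy1 i
    have hby2 := tail_le y hy0 hy1 i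
    rw [hty] at hby1 hby2
    have h2i : (2:ℝ)/2^i ≤ 2 := by
      rw [div_le_iff₀ (by positivity)]
      nlinarith [one_le_pow₀ (by norm_num : (1:ℝ) ≤ 2) (n := i)]
    set d := (digit x i : ℝ) with hdd
    set a := (4:ℝ) ^ (S x i) with haa
    set t := tail x i with htt
    have heq2 : d * a * (t + (x - y))^2 - d * a * t^2
        = (d * a * (2*t + (x - y))) * (x - y) := by ring
    rw [heq2, abs_mul]
    have hd0 : (0:ℝ) ≤ d := by positivity
    have hd1' : d ≤ 1 := digit_cast_le_one x i
    have ha0 : (0:ℝ) < a := by positivity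
    have haM : a ≤ 4 ^ M := pow_le_pow_right₀ (by norm_num) ((S_le x i).trans (le_of_lt hi))
    have habs : |d * a * (2*t + (x - y))| ≤ 4^M * 4 := by
      rw [abs_mul]
      have h1 : |d * a| ≤ 4^M := by
        rw [abs_of_nonneg (mul_nonneg hd0 ha0.le)]
        calc d * a ≤ 1 * a := mul_le_mul_of_nonneg_right hd1' ha0.le
          _ = a := one_mul a
          _ ≤ 4^M := haM
      have htle : t ≤ 2 := hbx2.trans h2i
      have hsle : t + (x - y) ≤ 2 := hby2.trans h2i
      have h2 : |2*t + (x - y)| ≤ 4 := by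
        rw [abs_le]
        constructor
        · linarith
        · linarith
      exact mul_le_mul h1 h2 (abs_nonneg _) (by positivity)
    have hyx : |x - y| = |y - x| := abs_sub_comm x y
    rw [hyx]
    calc |d * a * (2*t + (x - y))| * |y - x| ≤ (4^M * 4) * |y - x| :=
          mul_le_mul_of_nonneg_right habs (abs_nonneg _)
      _ = 4^(M+1) * |y - x| := by rw [pow_succ]
  have hsum : |∑ i ∈ Finset.range M, (term y i - term x i)|
      ≤ (M:ℝ) * (4^(M+1) * |y - x|) := by
    calc |∑ i ∈ Finset.range M, (term y i - term x i)|
        ≤ ∑ i ∈ Finset.range M, |term y i - term x i| := Finset.abs_sum_le_sum_abs _ _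
      _ ≤ ∑ _i ∈ Finset.range M, 4^(M+1) * |y - x| := Finset.sum_le_sum hterm
      _ = (M:ℝ) * (4^(M+1) * |y - x|) := by
          rw [Finset.sum_const, Finset.card_range, nsmul_eq_mul]
  have hFy := F_split y hy0 hy1 M
  have hFx := F_split x hx0 hx1 M
  have hdiff : F y - F x = (∑ i ∈ Finset.range M, (term y i - term x i))
      + (∑' j, term y (M+j) - ∑' j, term x (M+j)) := by
    rw [hFy, hFx, Finset.sum_sub_distrib]
    ring
  rw [hdiff]
  have hCb : (M:ℝ)*(4^(M+1)*|y-x|) ≤ C * |y-x| := by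
    rw [hC]
    nlinarith [abs_nonneg (y-x)]
  have hlt : C * |y - x| < C * (ε/(4*C)) := mul_lt_mul_of_pos_left hd2 hCpos
  have hCE : C * (ε/(4*C)) = ε/4 := by field_simp
  have hRdiff : |∑' j, term y (M+j) - ∑' j, term x (M+j)| ≤ ε/4 := by
    rw [abs_le]
    constructor <;> linarith
  calc |(∑ i ∈ Finset.range M, (term y i - term x i))
      + (∑' j, term y (M+j) - ∑' j, term x (M+j))|
      ≤ |∑ i ∈ Finset.range M, (term y i - term x i)|
        + |∑' j, term y (M+j) - ∑' j, term x (M+j)| := abs_add_le _ _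
    _ < ε/4 + ε/4 := by
        apply add_lt_add_of_lt_of_le ?_ hRdiff
        calc |∑ i ∈ Finset.range M, (term y i - term x i)| ≤ (M:ℝ)*(4^(M+1)*|y-x|) := hsum
          _ ≤ C * |y - x| := hCb
          _ < C * (ε/(4*C)) := hlt
          _ = ε/4 := hCE
    _ < ε := by linarith
lemma floor_int_sub_eps (N : ℤ) (e : ℝ) (h0 : 0 < e) (h1 : e ≤ 1) : ⌊(N:ℝ) - e⌋ = N - 1 := by
  apply Int.floor_eq_iff.mpr
  constructor
  · push_cast; linarith
  · push_cast; linarith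

lemma digit_of_floor_odd (z : ℝ) (hz : 0 ≤ z) (i : ℕ) (h : ⌊(2:ℝ)^i * z⌋ % 2 = 1) :
    digit z i = 1 := by
  have := digit_cast_int z hz i
  rw [h] at this
  exact_mod_cast this

lemma digit_of_floor_even (z : ℝ) (hz : 0 ≤ z) (i : ℕ) (h : ⌊(2:ℝ)^i * z⌋ % 2 = 0) :
    digit z i = 0 := by
  have := digit_cast_int z hz i
  rw [h] at this
  exact_mod_cast this

lemma dyadic_setup (x : ℝ) (hx0' : 0 < x) (hx1 : x ≤ 1)
    (hdy : ∃ n k : ℕ, x = (n : ℝ) / 2 ^ k) :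
    ∃ k n : ℕ, (2:ℝ) ^ k * x = n ∧ n % 2 = 1 ∧ 1 ≤ n ∧
      (∀ j < k, ∀ m : ℤ, (2:ℝ) ^ j * x ≠ m) := by
  classical
  have hP : ∃ k : ℕ, ∃ c : ℕ, (2:ℝ) ^ k * x = c := by
    obtain ⟨n, k, hnk⟩ := hdy
    exact ⟨k, n, by rw [hnk]; field_simp⟩
  set k := Nat.find hP with hkdef
  obtain ⟨n, hn⟩ := Nat.find_spec hP
  rw [← hkdef] at hn
  have hmin : ∀ j < k, ¬∃ c : ℕ, (2:ℝ) ^ j * x = c := fun j hj => Nat.find_min hP hj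
  have hn1 : 1 ≤ n := by
    by_contra h
    have : n = 0 := by omega
    rw [this] at hn
    push_cast at hn
    have h2 : (0:ℝ) < 2 ^ k * x := by positivity
    rw [hn] at h2
    exact lt_irrefl 0 h2
  have hodd : n % 2 = 1 := by
    rcases Nat.eq_zero_or_pos k with hk0 | hkpos
    · have : x = n := by rw [hk0] at hn; simpa using hn
      have : n = 1 := by
        have h1 : (n:ℝ) ≤ 1 := by rw [← this]; exact hx1
        have : n ≤ 1 := by exact_mod_cast h1
        omega
      omega
    · by_contra h
      have heven : n % 2 = 0 := by omega
      obtain ⟨l, hl⟩ := Nat.dvd_of_mod_eq_zero heven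
      apply hmin (k-1) (by omega)
      refine ⟨l, ?_⟩
      have hkk : k = (k-1) + 1 := by omega
      rw [hkk, pow_succ] at hn
      rw [hl] at hn
      push_cast at hn ⊢
      linarith
  refine ⟨k, n, hn, hodd, hn1, ?_⟩
  intro j hj m hm
  apply hmin j hj
  have hmpos : (0:ℤ) ≤ m := by
    have : (0:ℝ) < 2 ^ j * x := by positivity
    rw [hm] at this
    exact_mod_cast this.le
  refine ⟨m.toNat, ?_⟩
  rw [hm]
  exact_mod_cast (Int.toNat_of_nonneg hmpos).symm
section dyadicX
variable (x : ℝ) (k n : ℕ)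

lemma floor_shift (hk : (2:ℝ) ^ k * x = n) (t : ℕ) :
    ⌊(2:ℝ) ^ (k + t) * x⌋ = (2 ^ t * n : ℕ) := by
  have h1 : (2:ℝ) ^ (k + t) * x = ((2 ^ t * n : ℕ) : ℝ) := by
    have h2 := congrArg (fun r => (2:ℝ) ^ t * r) hk
    push_cast
    rw [pow_add]
    ring_nf
    ring_nf at h2
    linarith
  rw [h1, Int.floor_natCast]

lemma digit_x_k (hx0 : 0 ≤ x) (hk : (2:ℝ) ^ k * x = n) (hodd : n % 2 = 1) :
    digit x k = 1 := by
  apply digit_of_floor_odd x hx0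
  have h := floor_shift x k n hk 0
  simp at h
  rw [h]
  omega

lemma digit_x_gt (hx0 : 0 ≤ x) (hk : (2:ℝ) ^ k * x = n) (t : ℕ) :
    digit x (k + (t+1)) = 0 := by
  apply digit_of_floor_even x hx0
  rw [floor_shift x k n hk (t+1)]
  have h2 : ((2 ^ (t+1) * n : ℕ) : ℤ) = 2 * ((2 ^ t * n : ℕ) : ℤ) := by
    push_cast
    ring
  rw [h2, Int.mul_emod_right]

lemma Q_x_succ (hx0 : 0 ≤ x) (hx1 : x ≤ 1) (hk : (2:ℝ) ^ k * x = n) :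
    Q x (k + 1) = x := by
  rw [Q_succ_floor x hx0 hx1]
  have hf := floor_shift x k n hk 0
  simp only [Nat.add_zero, pow_zero, one_mul] at hf
  rw [hf]
  have hp : ((2:ℝ) ^ k) ≠ 0 := by positivity
  push_cast
  rw [eq_comm, eq_div_iff hp]
  linarith [hk]

lemma tail_x_k (hx0 : 0 ≤ x) (hx1 : x ≤ 1) (hk : (2:ℝ) ^ k * x = n) (hodd : n % 2 = 1) :
    tail x k = 1 / 2 ^ k := by
  have h1 : tail x (k+1) = 2 / 2 ^ (k+1) := by
    rw [tail_eq x hx0 hx1, Q_x_succ x k n hx0 hx1 hk]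
    ring
  have h2 := tail_succ x hx0 hx1 k
  rw [digit_x_k x k n hx0 hk hodd] at h2
  rw [h1] at h2
  push_cast at h2
  rw [pow_succ] at h2
  have hp : ((2:ℝ) ^ k) ≠ 0 := by positivity
  field_simp at h2 ⊢
  linarith

lemma term_x_k (hx0 : 0 ≤ x) (hx1 : x ≤ 1) (hk : (2:ℝ) ^ k * x = n) (hodd : n % 2 = 1) :
    term x k = 4 ^ (S x k) / 4 ^ k := by
  unfold term
  rw [digit_x_k x k n hx0 hk hodd, tail_x_k x k n hx0 hx1 hk hodd]
  rw [div_pow, one_pow, ← four_pow]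
  push_cast
  ring

lemma F_x_lower (hx0 : 0 ≤ x) (hx1 : x ≤ 1) (hk : (2:ℝ) ^ k * x = n) (hodd : n % 2 = 1) :
    ∑ i ∈ Finset.range k, term x i + 4 ^ (S x k) / 4 ^ k ≤ F x := by
  rw [F_split x hx0 hx1 (k+1), Finset.sum_range_succ,
    term_x_k x k n hx0 hx1 hk hodd]
  linarith [tsum_tail_nonneg x (k+1)]

end dyadicX
lemma pow_shift (x : ℝ) (k n : ℕ) (hk : (2:ℝ) ^ k * x = n) (t : ℕ) :
    (2:ℝ) ^ (k + t) * x = ((2 ^ t * n : ℕ) : ℝ) := by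
  have h2 := congrArg (fun r => (2:ℝ) ^ t * r) hk
  push_cast
  rw [pow_add]
  ring_nf
  ring_nf at h2
  linarith

lemma jump (x : ℝ) (k n m : ℕ) (hx0 : 0 ≤ x) (hx1 : x ≤ 1)
    (hk : (2:ℝ) ^ k * x = n) (hodd : n % 2 = 1) (hn1 : 1 ≤ n)
    (hmin : ∀ j < k, ∀ z : ℤ, (2:ℝ) ^ j * x ≠ z) (hkm : k < m) :
    (2/3) * (4 ^ (S x k) / 4 ^ k) - 5 * k * 4 ^ k / 2 ^ m
      ≤ F x - F (x - 1 / 2 ^ m) := by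
  set y : ℝ := x - 1 / 2 ^ m with hy
  set σ : ℕ := S x k with hσ
  have hxk : 1 / 2 ^ k ≤ x := by
    rw [div_le_iff₀ (by positivity)]
    have : (1:ℝ) ≤ n := by exact_mod_cast hn1
    linarith [hk]
  have h2km : (2:ℝ) ^ k < 2 ^ m := by
    apply pow_lt_pow_right₀ (by norm_num) hkm
  have hy0 : 0 ≤ y := by
    rw [hy]
    have : (1:ℝ)/2^m < 1/2^k := by
      apply div_lt_div_of_pos_left one_pos (by positivity) h2km
    linarith
  have hy1 : y ≤ 1 := by
    rw [hy]
    have : (0:ℝ) < 1/2^m := by positivity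
    linarith
  -- floors below k
  have hfl_lt : ∀ i < k, ⌊(2:ℝ) ^ i * y⌋ = ⌊(2:ℝ) ^ i * x⌋ := by
    intro i hi
    obtain ⟨u, hu⟩ : ∃ u, k = i + u := ⟨k - i, by omega⟩
    set f : ℤ := ⌊(2:ℝ) ^ i * x⌋ with hf
    have hfle : (f:ℝ) ≤ 2 ^ i * x := Int.floor_le _
    have hflt : (f:ℝ) < 2 ^ i * x := by
      rcases lt_or_eq_of_le hfle with h | h
      · exact h
      · exact absurd h.symm (hmin i hi f)
    have hz : (1:ℝ) ≤ 2 ^ u * (2 ^ i * x - f) := by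
      have hzint : ((n:ℤ) - f * 2 ^ u : ℤ) ≥ 1 := by
        have hcast : (((n:ℤ) - f * 2 ^ u : ℤ) : ℝ) = 2 ^ u * (2 ^ i * x - f) := by
          push_cast
          have : (2:ℝ) ^ k * x = 2 ^ u * (2 ^ i * x) := by
            rw [hu, pow_add]; ring
          rw [mul_sub, ← this, hk]
          ring
        have hpos : (0:ℝ) < (((n:ℤ) - f * 2 ^ u : ℤ) : ℝ) := by
          rw [hcast]
          have : (0:ℝ) < 2 ^ i * x - f := by linarith
          positivity
        have : (0:ℤ) < (n:ℤ) - f * 2 ^ u := by exact_mod_cast hpos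
        omega
      have := hzint
      have hcast : (((n:ℤ) - f * 2 ^ u : ℤ) : ℝ) = 2 ^ u * (2 ^ i * x - f) := by
        push_cast
        have h3 : (2:ℝ) ^ k * x = 2 ^ u * (2 ^ i * x) := by
          rw [hu, pow_add]; ring
        rw [mul_sub, ← h3, hk]
        ring
      have h4 : (1:ℝ) ≤ (((n:ℤ) - f * 2 ^ u : ℤ) : ℝ) := by exact_mod_cast hzint
      linarith [hcast ▸ h4]
    have hfrac : 2 ^ i / 2 ^ k ≤ (2:ℝ) ^ i * x - f := by
      have hup : (0:ℝ) < 2 ^ u := by positivity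
      have h5 : (1:ℝ)/2^u ≤ 2^i * x - f := by
        rw [div_le_iff₀ hup]
        nlinarith [hz]
      have h6 : (2:ℝ)^i/2^k = 1/2^u := by
        rw [hu, pow_add]
        have hip : ((2:ℝ)^i) ≠ 0 := by positivity
        field_simp
      rw [h6]
      exact h5
    apply Int.floor_eq_iff.mpr
    constructor
    · have hstep : (2:ℝ)^i/2^m < 2^i/2^k := by
        apply div_lt_div_of_pos_left (by positivity) (by positivity) h2km
      have hexp : (2:ℝ)^i * y = 2^i * x - 2^i/2^m := by
        rw [hy]; ring
      rw [hexp]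
      linarith
    · have hexp : (2:ℝ)^i * y = 2^i * x - 2^i/2^m := by
        rw [hy]; ring
      rw [hexp]
      have : (0:ℝ) < 2^i/2^m := by positivity
      have := Int.lt_floor_add_one ((2:ℝ)^i * x)
      push_cast
      linarith
  have hd_lt : ∀ i < k, digit y i = digit x i := by
    intro i hi
    unfold digit
    rw [hfl_lt i hi]
  have hQ_le : ∀ i ≤ k, Q y i = Q x i := by
    intro i hi
    unfold Q
    apply Finset.sum_congr rfl
    intro j hj
    rw [hd_lt j (lt_of_lt_of_le (Finset.mem_range.mp hj) hi)]
  have hS_le : ∀ i ≤ k, S y i = S x i := by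
    intro i hi
    unfold S
    apply Finset.sum_congr rfl
    intro j hj
    rw [hd_lt j (lt_of_lt_of_le (Finset.mem_range.mp hj) hi)]
  have hfl_mid : ∀ t, k + t ≤ m → ⌊(2:ℝ) ^ (k+t) * y⌋ = ((2^t * n : ℕ) : ℤ) - 1 := by
    intro t ht
    have hexp : (2:ℝ)^(k+t) * y = (((2^t*n : ℕ) : ℤ) : ℝ) - 2^(k+t)/2^m := by
      rw [hy, mul_sub, pow_shift x k n hk t]
      push_cast
      ring
    rw [hexp]
    apply floor_int_sub_eps
    · positivity
    · rw [div_le_one (by positivity)]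
      exact pow_le_pow_right₀ (by norm_num) ht
  have hd_k : digit y k = 0 := by
    apply digit_of_floor_even y hy0
    have h := hfl_mid 0 (by omega)
    simp only [Nat.add_zero, pow_zero, one_mul] at h
    rw [h]
    omega
  have hd_mid : ∀ t, 1 ≤ t → k + t ≤ m → digit y (k+t) = 1 := by
    intro t ht1 htm
    obtain ⟨t', rfl⟩ : ∃ t', t = t' + 1 := ⟨t - 1, by omega⟩
    apply digit_of_floor_odd y hy0
    rw [hfl_mid (t'+1) htm]
    have hc : ((2^(t'+1)*n : ℕ) : ℤ) = 2 * ((2^t'*n : ℕ) : ℤ) := by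
      push_cast
      ring
    rw [hc]
    omega
  obtain ⟨s, hs⟩ : ∃ s, m = k + s := ⟨m - k, by omega⟩
  have hfl_m := hfl_mid s (by omega)
  rw [← hs] at hfl_m
  have hd_gt : ∀ t, digit y (m+1+t) = 0 := by
    intro t
    apply digit_of_floor_even y hy0
    have hexp2 : (2:ℝ)^m * y = (((2^s*n : ℕ) : ℤ) : ℝ) - 1 := by
      rw [hy, mul_sub, hs, pow_shift x k n hk s]
      push_cast
      have hm0 : ((2:ℝ)^(k+s)) ≠ 0 := by positivity
      field_simp
    have hexp3 : (2:ℝ)^(m+1+t) * y = ((2^(1+t) * (((2^s*n : ℕ) : ℤ) - 1) : ℤ) : ℝ) := by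
      have : (2:ℝ)^(m+1+t) * y = 2^(1+t) * ((2:ℝ)^m * y) := by
        rw [show m+1+t = (1+t)+m by omega, pow_add]
        ring
      rw [this, hexp2]
      push_cast
      ring
    rw [hexp3, Int.floor_intCast]
    have : (2:ℤ)^(1+t) * (((2^s*n : ℕ) : ℤ) - 1) = 2 * (2^t * (((2^s*n : ℕ) : ℤ) - 1)) := by
      rw [pow_add]
      ring
    rw [this]
    omega
  have hQm : Q y (m+1) = y := by
    rw [Q_succ_floor y hy0 hy1 m, hfl_m]
    have h2m : ((2:ℝ)^m) ≠ 0 := by positivity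
    have hxm : (2:ℝ)^m * x = ((2^s*n : ℕ) : ℝ) := by
      rw [hs]
      exact pow_shift x k n hk s
    rw [eq_comm, hy, eq_div_iff h2m]
    push_cast
    push_cast at hxm
    have h1 : (1:ℝ)/2^m*2^m = 1 := by field_simp
    nlinarith [hxm, h1]
  have htail_m1 : tail y (m+1) = 1/2^m := by
    rw [tail_eq y hy0 hy1, hQm, pow_succ]
    ring
  have htail_mid : ∀ j, j ≤ m - k → tail y (m+1-j) = 1/2^m := by
    intro j
    induction j with
    | zero => intro _; simpa using htail_m1
    | succ j ih =>
      intro hj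
      have hik : k + 1 ≤ m - j := by omega
      set i := m - j with hi
      have h1 : m + 1 - (j+1) = i := by omega
      have h2 : i + 1 = m + 1 - j := by omega
      have hdig1 : digit y i = 1 := by
        have := hd_mid (i - k) (by omega) (by omega)
        rwa [show k + (i - k) = i by omega] at this
      have h3 := tail_succ y hy0 hy1 i
      rw [hdig1] at h3
      rw [h1]
      have h4 : tail y (i+1) = 1/2^m := by
        rw [h2]
        exact ih (by omega)
      rw [h4] at h3
      push_cast at h3
      norm_num at h3
      rw [← h3, one_div]
  have htail : ∀ i, k+1 ≤ i → i ≤ m+1 → tail y i = 1/2^m := by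
    intro i h1 h2
    have := htail_mid (m+1-i) (by omega)
    rwa [show m+1-(m+1-i) = i by omega] at this
  have hS_mid : ∀ j, k+1+j ≤ m+1 → S y (k+1+j) = σ + j := by
    intro j
    induction j with
    | zero =>
      intro _
      rw [Nat.add_zero, S_succ, hd_k, hS_le k le_rfl, hσ]
    | succ j ih =>
      intro hj
      rw [show k+1+(j+1) = (k+1+j)+1 by omega, S_succ, ih (by omega)]
      have hd1 : digit y (k+1+j) = 1 := by
        have := hd_mid (1+j) (by omega) (by omega)
        rwa [show k+(1+j) = k+1+j by omega] at this
      rw [hd1]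
      omega
  have hterm_mid : ∀ j, j < m - k → term y (k+1+j) = 4^(σ+j) * (1/4^m) := by
    intro j hj
    unfold term
    have hd1 : digit y (k+1+j) = 1 := by
      have := hd_mid (1+j) (by omega) (by omega)
      rwa [show k+(1+j) = k+1+j by omega] at this
    rw [hd1, hS_mid j (by omega), htail (k+1+j) (by omega) (by omega)]
    rw [div_pow, one_pow, ← four_pow]
    push_cast
    ring
  have hFy : F y = ∑ i ∈ Finset.range k, term y i
      + ∑ j ∈ Finset.range (m-k), (4^(σ+j) * ((1:ℝ)/4^m)) := by
    rw [F_split y hy0 hy1 (m+1)]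
    have htz : ∑' j, term y (m+1+j) = 0 := by
      have : ∀ j : ℕ, term y (m+1+j) = 0 := by
        intro j
        unfold term
        rw [hd_gt j]
        simp
      rw [tsum_congr this]
      exact tsum_zero
    rw [htz, add_zero]
    have hsplit : ∑ i ∈ Finset.range (m+1), term y i
        = ∑ i ∈ Finset.range (k+1), term y i + ∑ i ∈ Finset.Ico (k+1) (m+1), term y i := by
      rw [Finset.range_eq_Ico, Finset.range_eq_Ico]
      exact (Finset.sum_Ico_consecutive (term y) (Nat.zero_le (k+1)) (by omega)).symm
    rw [hsplit, Finset.sum_range_succ]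
    have htk : term y k = 0 := by
      unfold term
      rw [hd_k]
      simp
    rw [htk, add_zero]
    congr 1
    rw [Finset.sum_Ico_eq_sum_range, show (m+1)-(k+1) = m-k by omega]
    apply Finset.sum_congr rfl
    intro j hj
    rw [show k+1+j = k+1+j by rfl]
    exact hterm_mid j (Finset.mem_range.mp hj)
  have hgeo : ∑ j ∈ Finset.range (m-k), (4^(σ+j) * ((1:ℝ)/4^m)) ≤ 4^σ/(3*4^k) := by
    have hpow4 : (4:ℝ)^(m-k)*4^k = 4^m := by
      rw [← pow_add]
      congr 1
      omega
    have h1 : ∑ j ∈ Finset.range (m-k), (4^(σ+j) * ((1:ℝ)/4^m))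
        = 4^σ * (∑ j ∈ Finset.range (m-k), (4:ℝ)^j) / 4^m := by
      rw [Finset.mul_sum, Finset.sum_div]
      apply Finset.sum_congr rfl
      intro j _
      rw [pow_add]
      ring
    rw [h1, geom_sum_eq (by norm_num : (4:ℝ) ≠ 1)]
    have h4k : (0:ℝ) < 4^k := by positivity
    have h4m : (0:ℝ) < 4^m := by positivity
    have h4σ : (0:ℝ) < 4^σ := by positivity
    rw [div_le_div_iff₀ (by positivity) (by positivity)]
    have hG : (0:ℝ) < (4:ℝ)^(m-k) := by positivity
    have hkey : ((4:ℝ)^(m-k) - 1) * 4^k ≤ 4^m := by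
      nlinarith [hpow4]
    calc 4^σ * (((4:ℝ)^(m-k) - 1)/(4-1)) * (3*4^k)
        = 4^σ * (((4:ℝ)^(m-k) - 1) * 4^k) := by ring
      _ ≤ 4^σ * 4^m := by
          apply mul_le_mul_of_nonneg_left hkey h4σ.le
      _ = 4^σ * 4^m := rfl
  have hAterm : ∀ i ∈ Finset.range k, term y i ≤ term x i + 5*4^k/2^m := by
    intro i hi'
    have hi := Finset.mem_range.mp hi'
    have hty : tail y i = tail x i + 1/2^m := by
      rw [tail_eq y hy0 hy1, tail_eq x hx0 hx1, hQ_le i (le_of_lt hi), hy]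
      ring
    unfold term
    rw [hty, hS_le i (le_of_lt hi), hd_lt i hi]
    set d := (digit x i : ℝ) with hdd
    set a := (4:ℝ)^(S x i) with haa
    set t := tail x i with htt
    set e := (1:ℝ)/2^m with hee
    have he0 : 0 < e := by positivity
    have he1 : e ≤ 1 := by
      rw [hee, div_le_one (by positivity)]
      exact one_le_pow₀ (by norm_num)
    have ht0 : 0 < t := tail_pos x hx0 hx1 i
    have ht2 : t ≤ 2 := by
      have h1 := tail_le x hx0 hx1 i
      have h2 : (2:ℝ)/2^i ≤ 2 := by
        rw [div_le_iff₀ (by positivity)]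
        nlinarith [one_le_pow₀ (by norm_num : (1:ℝ) ≤ 2) (n := i)]
      linarith
    have hd0 : (0:ℝ) ≤ d := by positivity
    have hd1 : d ≤ 1 := digit_cast_le_one x i
    have ha0 : (0:ℝ) < a := by positivity
    have hak : a ≤ 4^k := pow_le_pow_right₀ (by norm_num) ((S_le x i).trans (le_of_lt hi))
    have hda : d * a ≤ 4^k := by
      calc d * a ≤ 1 * a := mul_le_mul_of_nonneg_right hd1 ha0.le
        _ = a := one_mul a
        _ ≤ 4^k := hak
    have h2 : e*(2*t+e) ≤ e*5 := by
      apply mul_le_mul_of_nonneg_left (by linarith) he0.le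
    have h4 : (0:ℝ) ≤ e*(2*t+e) := by positivity
    have h5 : d * a * (e*(2*t+e)) ≤ 4^k * (e*5) :=
      mul_le_mul hda h2 h4 (by positivity)
    have hexp : d * a * (t+e)^2 = d*a*t^2 + d*a*(e*(2*t+e)) := by ring
    have hfin : (4:ℝ)^k * (e*5) = 5*4^k/2^m := by
      rw [hee]
      ring
    calc d * a * (t+e)^2 = d*a*t^2 + d*a*(e*(2*t+e)) := hexp
      _ ≤ d*a*t^2 + 4^k*(e*5) := by linarith
      _ = d*a*t^2 + 5*4^k/2^m := by rw [hfin]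
  have hAsum : ∑ i ∈ Finset.range k, term y i
      ≤ ∑ i ∈ Finset.range k, term x i + k*(5*4^k/2^m) := by
    calc ∑ i ∈ Finset.range k, term y i
        ≤ ∑ i ∈ Finset.range k, (term x i + 5*4^k/2^m) := Finset.sum_le_sum hAterm
      _ = ∑ i ∈ Finset.range k, term x i + k*(5*4^k/2^m) := by
          rw [Finset.sum_add_distrib, Finset.sum_const, Finset.card_range, nsmul_eq_mul]
  have hFxl := F_x_lower x k n hx0 hx1 hk hodd
  have hFyu : F y ≤ ∑ i ∈ Finset.range k, term x i + k*(5*4^k/2^m) + 4^σ/(3*4^k) := by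
    rw [hFy]
    linarith
  have hfin2 : (k:ℝ)*(5*4^k/2^m) = 5*k*4^k/2^m := by ring
  rw [← hσ] at hFxl
  rw [hfin2] at hFyu
  have hgoal : (2/3) * ((4:ℝ)^σ / 4^k) - 5*k*4^k/2^m
      ≤ (∑ i ∈ Finset.range k, term x i + 4^σ/4^k)
        - (∑ i ∈ Finset.range k, term x i + 5*k*4^k/2^m + 4^σ/(3*4^k)) := by
    have h4k : (0:ℝ) < 4^k := by positivity
    have : (4:ℝ)^σ/4^k - 4^σ/(3*4^k) = (2/3)*(4^σ/4^k) := by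
      field_simp
      ring
    linarith
  linarith
lemma part3 (x : ℝ) (hx : x ∈ Set.Ioc (0:ℝ) 1) (hdy : ∃ n k : ℕ, x = (n:ℝ) / 2 ^ k) :
    ¬ ContinuousWithinAt F (Set.Icc (0:ℝ) 1) x := by
  obtain ⟨hx0', hx1⟩ := hx
  have hx0 : 0 ≤ x := hx0'.le
  obtain ⟨k, n, hk, hodd, hn1, hmin⟩ := dyadic_setup x hx0' hx1 hdy
  intro hcont
  rw [Metric.continuousWithinAt_iff] at hcont
  set δ0 : ℝ := (1/3) * (4^(S x k)/4^k) with hδ0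
  have hδ0pos : 0 < δ0 := by positivity
  obtain ⟨δ, hδpos, hδ⟩ := hcont δ0 hδ0pos
  set c2 : ℝ := δ0 / (5*k*4^k+1) with hc2
  have hc2pos : 0 < c2 := by positivity
  obtain ⟨m0, hm0⟩ := exists_pow_lt_of_lt_one (lt_min hc2pos hδpos) (by norm_num : (1/2:ℝ) < 1)
  set m : ℕ := max m0 (k+1) with hm
  have hkm : k < m := lt_of_lt_of_le (Nat.lt_succ_self k) (le_max_right m0 (k+1))
  have hmono : ((1:ℝ)/2)^m ≤ ((1:ℝ)/2)^m0 :=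
    pow_le_pow_of_le_one (by norm_num) (by norm_num) (le_max_left m0 (k+1))
  have hsmall : (1:ℝ)/2^m < min c2 δ := by
    rw [← half_pow]
    exact lt_of_le_of_lt hmono hm0
  have hsc : (1:ℝ)/2^m < c2 := lt_of_lt_of_le hsmall (min_le_left _ _)
  have hsδ : (1:ℝ)/2^m < δ := lt_of_lt_of_le hsmall (min_le_right _ _)
  set y : ℝ := x - 1/2^m with hy
  have hxk : 1 / 2 ^ k ≤ x := by
    rw [div_le_iff₀ (by positivity)]
    have : (1:ℝ) ≤ n := by exact_mod_cast hn1
    linarith [hk]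
  have h2km : (2:ℝ) ^ k < 2 ^ m := pow_lt_pow_right₀ (by norm_num) hkm
  have hy0 : 0 ≤ y := by
    rw [hy]
    have : (1:ℝ)/2^m < 1/2^k := by
      apply div_lt_div_of_pos_left one_pos (by positivity) h2km
    linarith
  have hy1 : y ≤ 1 := by
    rw [hy]
    have : (0:ℝ) < 1/2^m := by positivity
    linarith
  have hdist : dist y x < δ := by
    rw [Real.dist_eq, hy]
    rw [show x - 1/2^m - x = -(1/2^m) by ring, abs_neg, abs_of_pos (by positivity)]
    exact hsδ
  have hcl := hδ ⟨hy0, hy1⟩ hdist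
  rw [Real.dist_eq] at hcl
  have hjump := jump x k n m hx0 hx1 hk hodd hn1 hmin hkm
  have hii : 5*(k:ℝ)*4^k/2^m ≤ δ0 := by
    have h1 : (1:ℝ)/2^m ≤ δ0/(5*k*4^k+1) := le_of_lt hsc
    have h2 : (0:ℝ) ≤ 5*(k:ℝ)*4^k := by positivity
    have h3 : (0:ℝ) < 5*(k:ℝ)*4^k+1 := by positivity
    have h4 : 5*(k:ℝ)*4^k/2^m = (5*(k:ℝ)*4^k) * (1/2^m) := by ring
    rw [h4]
    calc (5*(k:ℝ)*4^k) * (1/2^m) ≤ (5*(k:ℝ)*4^k) * (δ0/(5*k*4^k+1)) :=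
          mul_le_mul_of_nonneg_left h1 h2
      _ ≤ δ0 := by
          rw [mul_div_assoc']
          rw [div_le_iff₀ h3]
          nlinarith [hδ0pos]
  have h2δ : (2/3) * ((4:ℝ)^(S x k)/4^k) = 2 * δ0 := by
    rw [hδ0]; ring
  rw [h2δ] at hjump
  have hFlow : δ0 ≤ F x - F y := by linarith
  have : |F y - F x| ≥ δ0 := by
    rw [abs_sub_comm]
    calc δ0 ≤ F x - F y := hFlow
      _ ≤ |F x - F y| := le_abs_self _
  linarith

theorem F_continuity :
    ContinuousWithinAt F (Set.Icc (0 : ℝ) 1) 0 ∧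
    (∀ x ∈ Set.Ioo (0 : ℝ) 1, (¬ ∃ n k : ℕ, x = (n : ℝ) / 2 ^ k) →
      ContinuousWithinAt F (Set.Icc (0 : ℝ) 1) x) ∧
    (∀ x ∈ Set.Ioc (0 : ℝ) 1, (∃ n k : ℕ, x = (n : ℝ) / 2 ^ k) →
      ¬ ContinuousWithinAt F (Set.Icc (0 : ℝ) 1) x) :=
  ⟨part1, fun x hx hnd => part2 x hx hnd, fun x hx hdy => part3 x hx hdy⟩
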